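/- arXiv:2004.10331 — 5 statements merged into one kernel-verified Lean document; each statement's English description precedes it below -/
import Mathlib

section
/- Assume there exists θ̄ ∈ Θ such that û(x,θ̄) = u_p*(x) for every x ∈ W^c (so in particular θ̄ ∈ Ξ). Then for every λ ≥ 0 such that S_λ ⊆ Ξ, every θ* ∈ S_λ satisfies û(x,θ*) = u_p*(x) for every x ∈ W^c. That is, whenever the penalty is large enough that all global minimizers of the penalized problem satisfy the dissipation constraint, every global minimizer recovers the pointwise min-norm stabilizing controller on W^c. -/
open MeasureTheory
open scoped InnerProductSpace

/-- Theorem 1 of the paper: if some parameter `θ̄ ∈ Θ` exactly reproduces the pointwise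
min-norm controller `u_p*` on `W^c`, then for every `λ ≥ 0` for which all global minimizers
of `L_λ` over `Θ` satisfy the dissipation constraint (`S_λ ⊆ Ξ`), every global minimizer
`θ* ∈ S_λ` satisfies `û(x,θ*) = u_p*(x)` for all `x ∈ W^c`. -/
theorem learned_min_norm {n m K : ℕ}
    (f_p : EuclideanSpace ℝ (Fin n) → EuclideanSpace ℝ (Fin n))
    (g_p : EuclideanSpace ℝ (Fin n) →
      (EuclideanSpace ℝ (Fin m) →L[ℝ] EuclideanSpace ℝ (Fin n)))
    (V : EuclideanSpace ℝ (Fin n) → ℝ)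
    (gradV : EuclideanSpace ℝ (Fin n) → EuclideanSpace ℝ (Fin n))
    (sig : EuclideanSpace ℝ (Fin n) → ℝ)
    (hfp : Continuous f_p) (hgp : Continuous g_p) (hsig : Continuous sig)
    (hV : ∀ x, HasGradientAt V (gradV x) x) (hgradV : Continuous gradV)
    (c : ℝ) (hc : 0 < c)
    (Wc : Set (EuclideanSpace ℝ (Fin n))) (hWc : Wc = {x | V x ≤ c})
    (hWcpt : IsCompact Wc)
    (μ : Measure (EuclideanSpace ℝ (Fin n))) [IsProbabilityMeasure μ]
    (hsupp : ∀ x : EuclideanSpace ℝ (Fin n),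
      x ∈ Wc ↔ ∀ U : Set (EuclideanSpace ℝ (Fin n)), IsOpen U → x ∈ U → 0 < μ U)
    (Θ : Set (EuclideanSpace ℝ (Fin K)))
    (uhat : EuclideanSpace ℝ (Fin n) → EuclideanSpace ℝ (Fin K) →
      EuclideanSpace ℝ (Fin m))
    (huhat : Continuous fun p : EuclideanSpace ℝ (Fin n) × EuclideanSpace ℝ (Fin K) =>
      uhat p.1 p.2)
    (Δ : EuclideanSpace ℝ (Fin n) → EuclideanSpace ℝ (Fin K) → ℝ)
    (hΔ : ∀ x θ, Δ x θ = ⟪gradV x, f_p x + g_p x (uhat x θ)⟫_ℝ + sig x)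
    (L : ℝ → EuclideanSpace ℝ (Fin K) → ℝ)
    (hL : ∀ lam θ, L lam θ = ∫ x in Wc, (‖uhat x θ‖ ^ 2 + lam * max 0 (Δ x θ)) ∂μ)
    (S : ℝ → Set (EuclideanSpace ℝ (Fin K)))
    (hS : ∀ lam, S lam = {θ ∈ Θ | ∀ θ' ∈ Θ, L lam θ ≤ L lam θ'})
    (Ξ : Set (EuclideanSpace ℝ (Fin K)))
    (hΞ : Ξ = {θ ∈ Θ | ∀ x ∈ Wc, Δ x θ ≤ 0})
    -- the pointwise min-norm controller of the plant
    (upstar : EuclideanSpace ℝ (Fin n) → EuclideanSpace ℝ (Fin m))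
    (hup_cont : ContinuousOn upstar Wc)
    (hup_feas : ∀ x ∈ Wc, ⟪gradV x, f_p x + g_p x (upstar x)⟫_ℝ ≤ -sig x)
    (hup_min : ∀ x ∈ Wc, ∀ u : EuclideanSpace ℝ (Fin m),
      ⟪gradV x, f_p x + g_p x u⟫_ℝ ≤ -sig x → ‖upstar x‖ ≤ ‖u‖)
    -- the min-norm controller is realizable by the learned controller
    (θbar : EuclideanSpace ℝ (Fin K)) (hθbar : θbar ∈ Θ)
    (hθbar_eq : ∀ x ∈ Wc, uhat x θbar = upstar x) :
    ∀ lam : ℝ, 0 ≤ lam → S lam ⊆ Ξ →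
      ∀ θstar ∈ S lam, ∀ x ∈ Wc, uhat x θstar = upstar x := by
  intro lam hlam hSΞ θstar hθstar
  have hWcmeas : MeasurableSet Wc := hWcpt.isClosed.measurableSet
  rw [hS] at hθstar
  obtain ⟨hθstarΘ, hminall⟩ := hθstar
  have hmin : L lam θstar ≤ L lam θbar := hminall θbar hθbar
  have hΔstar : ∀ x ∈ Wc, Δ x θstar ≤ 0 := by
    have h := hSΞ (by rw [hS]; exact ⟨hθstarΘ, hminall⟩)
    rw [hΞ] at h; exact h.2
  have hfeas : ∀ x ∈ Wc, ⟪gradV x, f_p x + g_p x (uhat x θstar)⟫_ℝ ≤ -sig x := by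
    intro x hx
    have h := hΔstar x hx
    rw [hΔ] at h; linarith
  have hnorm_le : ∀ x ∈ Wc, ‖upstar x‖ ≤ ‖uhat x θstar‖ := fun x hx =>
    hup_min x hx _ (hfeas x hx)
  have hcont_star : Continuous fun x => uhat x θstar :=
    huhat.comp (continuous_id.prodMk continuous_const)
  have hInt1 : IntegrableOn (fun x => ‖uhat x θstar‖ ^ 2) Wc μ :=
    ((hcont_star.norm.pow 2).continuousOn).integrableOn_compact hWcpt
  have hInt2 : IntegrableOn (fun x => ‖upstar x‖ ^ 2) Wc μ :=
    (hup_cont.norm.pow 2).integrableOn_compact hWcpt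
  have hLstar : L lam θstar = ∫ x in Wc, ‖uhat x θstar‖ ^ 2 ∂μ := by
    rw [hL]
    apply setIntegral_congr_fun hWcmeas
    intro x hx
    simp [max_eq_left (hΔstar x hx)]
  have hΔbar : ∀ x ∈ Wc, Δ x θbar ≤ 0 := by
    intro x hx
    rw [hΔ, hθbar_eq x hx]
    have := hup_feas x hx; linarith
  have hLbar : L lam θbar = ∫ x in Wc, ‖upstar x‖ ^ 2 ∂μ := by
    rw [hL]
    apply setIntegral_congr_fun hWcmeas
    intro x hx
    simp [max_eq_left (hΔbar x hx), hθbar_eq x hx]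
  have hint_le : ∫ x in Wc, ‖uhat x θstar‖ ^ 2 ∂μ ≤ ∫ x in Wc, ‖upstar x‖ ^ 2 ∂μ := by
    rw [← hLstar, ← hLbar]; exact hmin
  set g : EuclideanSpace ℝ (Fin n) → ℝ :=
    fun x => ‖uhat x θstar‖ ^ 2 - ‖upstar x‖ ^ 2 with hgdef
  have hgInt : IntegrableOn g Wc μ := hInt1.sub hInt2
  have hg_nonneg : ∀ x ∈ Wc, 0 ≤ g x := by
    intro x hx
    have := pow_le_pow_left₀ (norm_nonneg _) (hnorm_le x hx) 2
    simp only [hgdef]; linarith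
  have hint_g : ∫ x in Wc, g x ∂μ = 0 := by
    refine le_antisymm ?_ (setIntegral_nonneg hWcmeas hg_nonneg)
    rw [integral_sub hInt1 hInt2]; linarith
  have hae : g =ᵐ[μ.restrict Wc] 0 := by
    refine (integral_eq_zero_iff_of_nonneg_ae ?_ hgInt).mp hint_g
    exact (ae_restrict_iff' hWcmeas).mpr (Filter.Eventually.of_forall fun x hx => hg_nonneg x hx)
  have hμcompl : μ Wcᶜ = 0 := by
    apply measure_null_of_locally_null
    intro x hx
    have hxnot : x ∉ Wc := hx
    rw [hsupp] at hxnot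
    push_neg at hxnot
    obtain ⟨U, hUopen, hxU, hU0⟩ := hxnot
    exact ⟨U, mem_nhdsWithin_of_mem_nhds (hUopen.mem_nhds hxU), le_antisymm hU0 zero_le⟩
  have hg_zero : ∀ x ∈ Wc, g x = 0 := by
    intro x0 hx0
    by_contra hne
    have hgpos : 0 < g x0 := lt_of_le_of_ne (hg_nonneg x0 hx0) (Ne.symm hne)
    have hgcont : ContinuousOn g Wc :=
      (hcont_star.norm.pow 2).continuousOn.sub (hup_cont.norm.pow 2)
    have hmemnhds : g ⁻¹' Set.Ioi 0 ∈ nhdsWithin x0 Wc :=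
      (hgcont x0 hx0) (isOpen_Ioi.mem_nhds hgpos)
    obtain ⟨U, hUopen, hxU, hUsub⟩ := mem_nhdsWithin.mp hmemnhds
    have hμU : 0 < μ U := (hsupp x0).mp hx0 U hUopen hxU
    have hμUWc : 0 < μ (U ∩ Wc) := by
      have h1 : μ U ≤ μ (U ∩ Wc) + μ Wcᶜ := by
        calc μ U ≤ μ ((U ∩ Wc) ∪ Wcᶜ) := measure_mono (fun y hy => by
              by_cases hyw : y ∈ Wc
              · exact Or.inl ⟨hy, hyw⟩
              · exact Or.inr hyw)
          _ ≤ μ (U ∩ Wc) + μ Wcᶜ := measure_union_le _ _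
      rw [hμcompl, add_zero] at h1
      exact lt_of_lt_of_le hμU h1
    have hnull : μ.restrict Wc {x | g x ≠ 0} = 0 := by
      have := hae
      rw [Filter.EventuallyEq, ae_iff] at this
      simpa using this
    have hsubne : U ∩ Wc ⊆ {x | g x ≠ 0} := fun y hy =>
      ne_of_gt (hUsub hy)
    have : μ.restrict Wc (U ∩ Wc) = 0 :=
      measure_mono_null hsubne hnull
    rw [Measure.restrict_apply (hUopen.measurableSet.inter hWcmeas)] at this
    rw [Set.inter_assoc, Set.inter_self] at this
    exact absurd this (ne_of_gt hμUWc)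
  -- final pointwise argument
  intro x hx
  set u := uhat x θstar with hu
  set v := upstar x with hv
  have hnormeq : ‖u‖ = ‖v‖ := by
    have h0 := hg_zero x hx
    have h1 : ‖u‖ ^ 2 = ‖v‖ ^ 2 := by simp only [hgdef] at h0; linarith
    nlinarith [norm_nonneg u, norm_nonneg v]
  -- midpoint
  set w : EuclideanSpace ℝ (Fin m) := (2 : ℝ)⁻¹ • (u + v) with hw
  have hwfeas : ⟪gradV x, f_p x + g_p x w⟫_ℝ ≤ -sig x := by
    have e1 : ⟪gradV x, f_p x + g_p x u⟫_ℝ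
        = ⟪gradV x, f_p x⟫_ℝ + ⟪gradV x, g_p x u⟫_ℝ := inner_add_right _ _ _
    have e2 : ⟪gradV x, f_p x + g_p x v⟫_ℝ
        = ⟪gradV x, f_p x⟫_ℝ + ⟪gradV x, g_p x v⟫_ℝ := inner_add_right _ _ _
    have ew : ⟪gradV x, f_p x + g_p x w⟫_ℝ
        = ⟪gradV x, f_p x⟫_ℝ
          + (2 : ℝ)⁻¹ * (⟪gradV x, g_p x u⟫_ℝ + ⟪gradV x, g_p x v⟫_ℝ) := by
      rw [hw, _root_.map_smul, map_add]
      rw [inner_add_right, real_inner_smul_right, inner_add_right]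
    have h1 := hfeas x hx
    have h2 := hup_feas x hx
    rw [e1] at h1
    rw [e2] at h2
    rw [ew]
    linarith
  have hvw : ‖v‖ ≤ ‖w‖ := hup_min x hx w hwfeas
  have hwnorm : ‖w‖ = (2 : ℝ)⁻¹ * ‖u + v‖ := by
    rw [hw, norm_smul]
    norm_num
  have hcs : ⟪u, v⟫_ℝ ≤ ‖u‖ * ‖v‖ := real_inner_le_norm u v
  have hadd : ‖u + v‖ ^ 2 = ‖u‖ ^ 2 + 2 * ⟪u, v⟫_ℝ + ‖v‖ ^ 2 := norm_add_sq_real u v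
  have hsub : ‖u - v‖ ^ 2 = ‖u‖ ^ 2 - 2 * ⟪u, v⟫_ℝ + ‖v‖ ^ 2 := norm_sub_sq_real u v
  have hsubz : ‖u - v‖ ^ 2 ≤ 0 := by
    have h4 : ‖v‖ * ‖v‖ ≤ ‖w‖ * ‖w‖ :=
      mul_self_le_mul_self (norm_nonneg _) hvw
    rw [hwnorm] at h4
    nlinarith [norm_nonneg (u + v), norm_nonneg v, hnormeq]
  have : u - v = 0 := by
    have := pow_eq_zero_iff (n := 2) (by norm_num) |>.mp
      (le_antisymm hsubz (by positivity))
    exact norm_eq_zero.mp this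
  exact sub_eq_zero.mp this
end

section
/- Suppose the learned controller is linear in its parameters, û(x,θ) = Σ_{k=1}^K θ_k u_k(x), where u_1, …, u_K : ℝⁿ → ℝᵐ are continuous and their restrictions to W^c are linearly independent in C(W^c, ℝᵐ). Then for every λ ≥ 0 the loss L_λ : ℝ^K → ℝ is strongly convex; that is, there exists α > 0 such that θ ↦ L_λ(θ) − (α/2)‖θ‖² is convex on ℝ^K. -/
open MeasureTheory
open scoped InnerProductSpace

lemma combo_sq {E : Type*} [NormedAddCommGroup E] [InnerProductSpace ℝ E]
    (x y : E) (a b : ℝ) (hab : a + b = 1) :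
    a * ‖x‖ ^ 2 + b * ‖y‖ ^ 2 - ‖a • x + b • y‖ ^ 2 = a * b * ‖x - y‖ ^ 2 := by
  have hb : b = 1 - a := by linarith
  subst hb
  simp only [← real_inner_self_eq_norm_sq, inner_add_left, inner_add_right,
    inner_sub_left, inner_sub_right, real_inner_smul_left, real_inner_smul_right,
    real_inner_comm y x]
  ring

lemma aux_quadform {K : ℕ} (q : EuclideanSpace ℝ (Fin K) → ℝ)
    (hc : Continuous q) (h0 : q 0 = 0)
    (hhom : ∀ (t : ℝ) z, q (t • z) = t ^ 2 * q z)
    (hpos : ∀ z, z ≠ 0 → 0 < q z) :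
    ∃ β : ℝ, 0 < β ∧ ∀ z, β * ‖z‖ ^ 2 ≤ q z := by
  by_cases hK : ∃ z₀ : EuclideanSpace ℝ (Fin K), ‖z₀‖ = 1
  · obtain ⟨z₀, hz₀⟩ := hK
    have hScpt : IsCompact (Metric.sphere (0 : EuclideanSpace ℝ (Fin K)) 1) :=
      isCompact_sphere 0 1
    have hSne : (Metric.sphere (0 : EuclideanSpace ℝ (Fin K)) 1).Nonempty :=
      ⟨z₀, by simpa [mem_sphere_zero_iff_norm] using hz₀⟩
    obtain ⟨w, hwS, hwmin⟩ := hScpt.exists_isMinOn hSne hc.continuousOn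
    have hw1 : ‖w‖ = 1 := mem_sphere_zero_iff_norm.1 hwS
    have hwne : w ≠ 0 := by intro h; rw [h] at hw1; simp at hw1
    refine ⟨q w, hpos w hwne, fun z => ?_⟩
    by_cases hz : z = 0
    · simp [hz, h0]
    · have hzpos : 0 < ‖z‖ := norm_pos_iff.2 hz
      have hzin : (‖z‖⁻¹ • z) ∈ Metric.sphere (0 : EuclideanSpace ℝ (Fin K)) 1 := by
        simp only [mem_sphere_zero_iff_norm, norm_smul, norm_inv, norm_norm]
        field_simp
      have h1 : q w ≤ q (‖z‖⁻¹ • z) := hwmin hzin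
      have h2 : q z = ‖z‖ ^ 2 * q (‖z‖⁻¹ • z) := by
        conv_lhs => rw [show z = ‖z‖ • (‖z‖⁻¹ • z) by
          rw [smul_smul, mul_inv_cancel₀ (ne_of_gt hzpos), one_smul]]
        rw [hhom]
      rw [h2]
      nlinarith [sq_nonneg ‖z‖]
  · refine ⟨1, one_pos, fun z => ?_⟩
    have hz0 : z = 0 := by
      by_contra hz
      have hzpos : 0 < ‖z‖ := norm_pos_iff.2 hz
      exact hK ⟨‖z‖⁻¹ • z, by
        rw [norm_smul, norm_inv, norm_norm, inv_mul_cancel₀ (ne_of_gt hzpos)]⟩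
    simp [hz0, h0]


/-- Lemma 2 of the paper: if the learned controller is linear in its parameters,
`û(x,θ) = Σ_k θ_k u_k(x)`, with `u_1, …, u_K` continuous and linearly independent on
`C(W^c, ℝᵐ)`, then for every `λ ≥ 0` the loss `L_λ` is strongly convex: there is `α > 0`
such that `θ ↦ L_λ(θ) − (α/2)‖θ‖²` is convex on `ℝ^K`. -/
theorem loss_strongly_convex {n m K : ℕ}
    (f_p : EuclideanSpace ℝ (Fin n) → EuclideanSpace ℝ (Fin n))
    (g_p : EuclideanSpace ℝ (Fin n) →
      (EuclideanSpace ℝ (Fin m) →L[ℝ] EuclideanSpace ℝ (Fin n)))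
    (V : EuclideanSpace ℝ (Fin n) → ℝ)
    (gradV : EuclideanSpace ℝ (Fin n) → EuclideanSpace ℝ (Fin n))
    (sig : EuclideanSpace ℝ (Fin n) → ℝ)
    (hfp : Continuous f_p) (hgp : Continuous g_p) (hsig : Continuous sig)
    (hV : ∀ x, HasGradientAt V (gradV x) x) (hgradV : Continuous gradV)
    (c : ℝ) (hc : 0 < c)
    (Wc : Set (EuclideanSpace ℝ (Fin n))) (hWc : Wc = {x | V x ≤ c})
    (hWcpt : IsCompact Wc)
    (μ : Measure (EuclideanSpace ℝ (Fin n))) [IsProbabilityMeasure μ]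
    (hsupp : ∀ x : EuclideanSpace ℝ (Fin n),
      x ∈ Wc ↔ ∀ U : Set (EuclideanSpace ℝ (Fin n)), IsOpen U → x ∈ U → 0 < μ U)
    -- the learned controller is linear in its parameters
    (u : Fin K → EuclideanSpace ℝ (Fin n) → EuclideanSpace ℝ (Fin m))
    (hu : ∀ i, Continuous (u i))
    (hindep : ∀ θ : Fin K → ℝ, (∀ x ∈ Wc, ∑ i, θ i • u i x = 0) → θ = 0)
    (uhat : EuclideanSpace ℝ (Fin n) → EuclideanSpace ℝ (Fin K) →
      EuclideanSpace ℝ (Fin m))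
    (huhat : ∀ x θ, uhat x θ = ∑ i, θ i • u i x)
    (Δ : EuclideanSpace ℝ (Fin n) → EuclideanSpace ℝ (Fin K) → ℝ)
    (hΔ : ∀ x θ, Δ x θ = ⟪gradV x, f_p x + g_p x (uhat x θ)⟫_ℝ + sig x)
    (L : ℝ → EuclideanSpace ℝ (Fin K) → ℝ)
    (hL : ∀ lam θ, L lam θ = ∫ x in Wc, (‖uhat x θ‖ ^ 2 + lam * max 0 (Δ x θ)) ∂μ) :
    ∀ lam : ℝ, 0 ≤ lam → ∃ α : ℝ, 0 < α ∧
      ConvexOn ℝ Set.univ fun θ : EuclideanSpace ℝ (Fin K) =>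
        L lam θ - α / 2 * ‖θ‖ ^ 2 := by
  intro lam hlam
  -- V is continuous, Wc closed & measurable
  have hVc : Continuous V :=
    continuous_iff_continuousAt.2 fun x => (hV x).hasFDerivAt.continuousAt
  have hWcl : IsClosed Wc := by
    rw [hWc]; exact isClosed_le hVc continuous_const
  have hWm : MeasurableSet Wc := hWcl.measurableSet
  -- the complement of the support is null
  have hnull : μ Wcᶜ = 0 := by
    apply measure_null_of_locally_null
    intro x hx
    have hx' : ¬ ∀ U : Set (EuclideanSpace ℝ (Fin n)), IsOpen U → x ∈ U → 0 < μ U :=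
      fun h => hx ((hsupp x).2 h)
    push_neg at hx'
    obtain ⟨U, hUo, hxU, hU0⟩ := hx'
    exact ⟨U, mem_nhdsWithin_of_mem_nhds (hUo.mem_nhds hxU),
      le_antisymm hU0 zero_le⟩
  -- continuity of the controller and of Δ in x
  have huc : ∀ θ, Continuous fun x => uhat x θ := by
    intro θ
    have h : (fun x => uhat x θ) = fun x => ∑ i, θ i • u i x := funext fun x => huhat x θ
    rw [h]
    exact continuous_finset_sum _ fun i _ => (hu i).const_smul (θ i)
  have hΔc : ∀ θ, Continuous fun x => Δ x θ := by
    intro θ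
    have h : (fun x => Δ x θ)
        = fun x => ⟪gradV x, f_p x + g_p x (uhat x θ)⟫_ℝ + sig x :=
      funext fun x => hΔ x θ
    rw [h]
    exact (hgradV.inner (hfp.add (hgp.clm_apply (huc θ)))).add hsig
  -- integrability
  have hint1 : ∀ θ, IntegrableOn (fun x => ‖uhat x θ‖ ^ 2) Wc μ := fun θ =>
    (((huc θ).norm.pow 2).continuousOn).integrableOn_compact hWcpt
  have hint2 : ∀ θ, IntegrableOn (fun x => max 0 (Δ x θ)) Wc μ := fun θ =>
    ((continuous_const.max (hΔc θ)).continuousOn).integrableOn_compact hWcpt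
  -- linearity of uhat in θ
  have husmul : ∀ (x) (t : ℝ) θ, uhat x (t • θ) = t • uhat x θ := by
    intro x t θ
    simp only [huhat, Finset.smul_sum]
    refine Finset.sum_congr rfl fun i _ => ?_
    have h : (t • θ) i = t * θ i := rfl
    rw [h, smul_smul]
  have huadd : ∀ x θ η, uhat x (θ + η) = uhat x θ + uhat x η := by
    intro x θ η
    simp only [huhat]
    rw [← Finset.sum_add_distrib]
    refine Finset.sum_congr rfl fun i _ => ?_
    have h : (θ + η) i = θ i + η i := rfl
    rw [h, add_smul]
  have husub : ∀ x θ η, uhat x (θ - η) = uhat x θ - uhat x η := by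
    intro x θ η
    have : θ - η = θ + (-1 : ℝ) • η := by rw [neg_one_smul]; abel
    rw [this, huadd, husmul, neg_one_smul]; abel
  -- homogeneity of the quadratic part
  have hqsmul : ∀ (t : ℝ) (z : EuclideanSpace ℝ (Fin K)),
      (∫ x in Wc, ‖uhat x (t • z)‖ ^ 2 ∂μ) = t ^ 2 * ∫ x in Wc, ‖uhat x z‖ ^ 2 ∂μ := by
    intro t z
    rw [← integral_const_mul]
    refine integral_congr_ae (Filter.Eventually.of_forall fun x => ?_)
    simp only [husmul x t z, norm_smul, mul_pow, Real.norm_eq_abs, sq_abs]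
  have hq0 : (∫ x in Wc, ‖uhat x (0 : EuclideanSpace ℝ (Fin K))‖ ^ 2 ∂μ) = 0 := by
    have h := hqsmul 0 0
    rw [zero_smul] at h
    simpa using h
  -- positivity of the quadratic part
  have hqpos : ∀ z : EuclideanSpace ℝ (Fin K), z ≠ 0 →
      0 < ∫ x in Wc, ‖uhat x z‖ ^ 2 ∂μ := by
    intro z hz
    have hex : ¬ ∀ x ∈ Wc, ∑ i, z i • u i x = 0 := by
      intro h
      apply hz
      have h2 := hindep (fun i => z i) h
      ext i
      exact congrFun h2 i
    push_neg at hex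
    obtain ⟨x₀, hx₀W, hx₀⟩ := hex
    have hx0' : uhat x₀ z ≠ 0 := by rw [huhat]; exact hx₀
    have hgc : Continuous fun x => ‖uhat x z‖ ^ 2 := (huc z).norm.pow 2
    have hgx₀ : 0 < ‖uhat x₀ z‖ ^ 2 := pow_pos (norm_pos_iff.mpr hx0') 2
    set U : Set (EuclideanSpace ℝ (Fin n)) :=
      {x | ‖uhat x₀ z‖ ^ 2 / 2 < ‖uhat x z‖ ^ 2} with hU
    have hUo : IsOpen U := isOpen_lt continuous_const hgc
    have hx₀U : x₀ ∈ U := by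
      simp only [hU, Set.mem_setOf_eq]; linarith
    have hμU : 0 < μ U := (hsupp x₀).1 hx₀W U hUo hx₀U
    have hμWU : 0 < μ (Wc ∩ U) := by
      by_contra h
      push_neg at h
      have h0 : μ (Wc ∩ U) = 0 := le_antisymm h zero_le
      have hle : μ U ≤ μ (Wc ∩ U) + μ Wcᶜ := by
        refine (measure_mono ?_).trans (measure_union_le _ _)
        intro x hx
        by_cases hxW : x ∈ Wc
        · exact Or.inl ⟨hxW, hx⟩
        · exact Or.inr hxW
      rw [h0, hnull, add_zero] at hle
      exact absurd (le_antisymm hle zero_le) (ne_of_gt hμU)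
    have h1 : ∫ x in Wc ∩ U, ‖uhat x z‖ ^ 2 ∂μ ≤ ∫ x in Wc, ‖uhat x z‖ ^ 2 ∂μ :=
      setIntegral_mono_set (hint1 z)
        (Filter.Eventually.of_forall fun x => by positivity)
        (HasSubset.Subset.eventuallyLE Set.inter_subset_left)
    have h2 : ‖uhat x₀ z‖ ^ 2 / 2 * (μ (Wc ∩ U)).toReal
        ≤ ∫ x in Wc ∩ U, ‖uhat x z‖ ^ 2 ∂μ := by
      apply setIntegral_ge_of_const_le_real (hWm.inter hUo.measurableSet) (measure_ne_top μ _)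
      · intro x hx; exact le_of_lt hx.2
      · exact (hint1 z).mono_set Set.inter_subset_left
    have h3 : 0 < ‖uhat x₀ z‖ ^ 2 / 2 * (μ (Wc ∩ U)).toReal :=
      mul_pos (by linarith) (ENNReal.toReal_pos (ne_of_gt hμWU) (measure_ne_top μ _))
    linarith
  -- continuity of the quadratic part in θ
  have hMint : ∀ i j : Fin K, IntegrableOn (fun x => ⟪u i x, u j x⟫_ℝ) Wc μ :=
    fun i j => (((hu i).inner (hu j)).continuousOn).integrableOn_compact hWcpt
  have hq_eq : ∀ z : EuclideanSpace ℝ (Fin K),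
      (∫ x in Wc, ‖uhat x z‖ ^ 2 ∂μ)
        = ∑ i, ∑ j, z i * z j * ∫ x in Wc, ⟪u i x, u j x⟫_ℝ ∂μ := by
    intro z
    have hpt : ∀ x, ‖uhat x z‖ ^ 2 = ∑ i, ∑ j, z i * z j * ⟪u i x, u j x⟫_ℝ := by
      intro x
      rw [← real_inner_self_eq_norm_sq, huhat, sum_inner]
      refine Finset.sum_congr rfl fun i _ => ?_
      rw [inner_sum]
      refine Finset.sum_congr rfl fun j _ => ?_
      rw [real_inner_smul_left, real_inner_smul_right]; ring
    calc (∫ x in Wc, ‖uhat x z‖ ^ 2 ∂μ)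
        = ∫ x in Wc, ∑ i, ∑ j, z i * z j * ⟪u i x, u j x⟫_ℝ ∂μ := by
          exact integral_congr_ae (Filter.Eventually.of_forall fun x => hpt x)
      _ = ∑ i, ∑ j, z i * z j * ∫ x in Wc, ⟪u i x, u j x⟫_ℝ ∂μ := by
          rw [integral_finset_sum _ fun i _ =>
            integrable_finset_sum _ fun j _ => (hMint i j).const_mul _]
          refine Finset.sum_congr rfl fun i _ => ?_
          rw [integral_finset_sum _ fun j _ => (hMint i j).const_mul _]
          exact Finset.sum_congr rfl fun j _ => integral_const_mul _ _
  have hproj : ∀ i : Fin K, Continuous fun z : EuclideanSpace ℝ (Fin K) => z i :=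
    fun i => (continuous_apply i).comp (PiLp.continuous_ofLp _ _)
  have hqc : Continuous fun z : EuclideanSpace ℝ (Fin K) =>
      ∫ x in Wc, ‖uhat x z‖ ^ 2 ∂μ := by
    rw [show (fun z : EuclideanSpace ℝ (Fin K) => ∫ x in Wc, ‖uhat x z‖ ^ 2 ∂μ)
        = fun z => ∑ i, ∑ j, z i * z j * ∫ x in Wc, ⟪u i x, u j x⟫_ℝ ∂μ
      from funext hq_eq]
    exact continuous_finset_sum _ fun i _ => continuous_finset_sum _ fun j _ =>
      (((hproj i).mul (hproj j)).mul continuous_const)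
  -- the coercivity constant
  obtain ⟨β, hβpos, hβ⟩ := aux_quadform _ hqc hq0 hqsmul hqpos
  refine ⟨2 * β, by linarith, convex_univ, ?_⟩
  intro θ _ η _ a b ha hb hab
  simp only [smul_eq_mul]
  -- split L into quadratic and hinge parts
  have hLsplit : ∀ ξ : EuclideanSpace ℝ (Fin K),
      L lam ξ = (∫ x in Wc, ‖uhat x ξ‖ ^ 2 ∂μ)
        + lam * ∫ x in Wc, max 0 (Δ x ξ) ∂μ := by
    intro ξ
    rw [hL lam ξ, integral_add (hint1 ξ) ((hint2 ξ).const_mul lam),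
      integral_const_mul]
  have hucomb : ∀ x, uhat x (a • θ + b • η) = a • uhat x θ + b • uhat x η := by
    intro x
    rw [huadd, husmul, husmul]
  -- quadratic part identity
  have keyq : a * (∫ x in Wc, ‖uhat x θ‖ ^ 2 ∂μ) + b * (∫ x in Wc, ‖uhat x η‖ ^ 2 ∂μ)
      - (∫ x in Wc, ‖uhat x (a • θ + b • η)‖ ^ 2 ∂μ)
      = a * b * ∫ x in Wc, ‖uhat x (θ - η)‖ ^ 2 ∂μ := by
    have hpt : ∀ x, ‖uhat x (a • θ + b • η)‖ ^ 2
        = a * ‖uhat x θ‖ ^ 2 + b * ‖uhat x η‖ ^ 2 - a * b * ‖uhat x (θ - η)‖ ^ 2 := by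
      intro x
      have h := combo_sq (uhat x θ) (uhat x η) a b hab
      rw [hucomb x, husub]
      linarith
    have hInt : (∫ x in Wc, ‖uhat x (a • θ + b • η)‖ ^ 2 ∂μ)
        = ∫ x in Wc, (a * ‖uhat x θ‖ ^ 2 + b * ‖uhat x η‖ ^ 2
            - a * b * ‖uhat x (θ - η)‖ ^ 2) ∂μ :=
      integral_congr_ae (Filter.Eventually.of_forall fun x => hpt x)
    have hIab : IntegrableOn
        (fun x => a * ‖uhat x θ‖ ^ 2 + b * ‖uhat x η‖ ^ 2) Wc μ :=
      ((hint1 θ).const_mul a).add ((hint1 η).const_mul b)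
    have hIc : IntegrableOn (fun x => a * b * ‖uhat x (θ - η)‖ ^ 2) Wc μ :=
      (hint1 (θ - η)).const_mul _
    rw [hInt, integral_sub hIab hIc,
      integral_add ((hint1 θ).const_mul a) ((hint1 η).const_mul b),
      integral_const_mul, integral_const_mul, integral_const_mul]
    ring
  -- norm identity
  have keyn : a * ‖θ‖ ^ 2 + b * ‖η‖ ^ 2 - ‖a • θ + b • η‖ ^ 2 = a * b * ‖θ - η‖ ^ 2 :=
    combo_sq θ η a b hab
  -- hinge part convexity
  have keyR : (∫ x in Wc, max 0 (Δ x (a • θ + b • η)) ∂μ)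
      ≤ a * (∫ x in Wc, max 0 (Δ x θ) ∂μ) + b * ∫ x in Wc, max 0 (Δ x η) ∂μ := by
    have hpt : ∀ x, max 0 (Δ x (a • θ + b • η))
        ≤ a * max 0 (Δ x θ) + b * max 0 (Δ x η) := by
      intro x
      have hΔaff : Δ x (a • θ + b • η) = a * Δ x θ + b * Δ x η := by
        simp only [hΔ, hucomb x, map_add, _root_.map_smul, inner_add_right,
          real_inner_smul_right]
        have hb1 : b = 1 - a := by linarith
        rw [hb1]; ring
      rw [hΔaff]
      apply max_le
      · exact add_nonneg (mul_nonneg ha (le_max_left _ _))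
          (mul_nonneg hb (le_max_left _ _))
      · exact add_le_add (mul_le_mul_of_nonneg_left (le_max_right _ _) ha)
          (mul_le_mul_of_nonneg_left (le_max_right _ _) hb)
    calc (∫ x in Wc, max 0 (Δ x (a • θ + b • η)) ∂μ)
        ≤ ∫ x in Wc, (a * max 0 (Δ x θ) + b * max 0 (Δ x η)) ∂μ :=
          integral_mono (hint2 _) (((hint2 θ).const_mul a).add ((hint2 η).const_mul b))
            hpt
      _ = a * (∫ x in Wc, max 0 (Δ x θ) ∂μ) + b * ∫ x in Wc, max 0 (Δ x η) ∂μ := by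
          rw [integral_add ((hint2 θ).const_mul a) ((hint2 η).const_mul b),
            integral_const_mul, integral_const_mul]
  -- combine
  rw [hLsplit, hLsplit, hLsplit]
  have hqlow := hβ (θ - η)
  have hRc : lam * (∫ x in Wc, max 0 (Δ x (a • θ + b • η)) ∂μ)
      ≤ lam * (a * (∫ x in Wc, max 0 (Δ x θ) ∂μ)
        + b * ∫ x in Wc, max 0 (Δ x η) ∂μ) :=
    mul_le_mul_of_nonneg_left keyR hlam
  have hprod : 0 ≤ a * b * ((∫ x in Wc, ‖uhat x (θ - η)‖ ^ 2 ∂μ) - β * ‖θ - η‖ ^ 2) :=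
    mul_nonneg (mul_nonneg ha hb) (by linarith)
  nlinarith [keyq, keyn, hRc, hprod]
end

section
/- Suppose the learned controller is linear in its parameters, û(x,θ) = Σ_{k=1}^K θ_k u_k(x), where u_1, …, u_K : ℝⁿ → ℝᵐ are continuous and their restrictions to W^c are linearly independent in C(W^c, ℝᵐ), and suppose there exists θ* ∈ Θ with û(x,θ*) = u_p*(x) for all x ∈ W^c. Then θ* is the unique minimizer of the expected control effort over the constraint-satisfying parameters: for every θ ∈ Ξ with θ ≠ θ*, ∫_{W^c} ‖û(x,θ)‖₂² dμ(x) > ∫_{W^c} ‖û(x,θ*)‖₂² dμ(x). -/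
open MeasureTheory
open scoped InnerProductSpace

/-- Uniqueness step of Theorem 2 of the paper: with a linearly parameterized controller
whose basis is linearly independent on `C(W^c, ℝᵐ)`, if `θ*` realizes the pointwise
min-norm controller `u_p*` on `W^c`, then `θ*` is the unique minimizer of expected control
effort over the constraint-satisfying parameters `Ξ`. -/
theorem min_effort_unique {n m K : ℕ}
    (f_p : EuclideanSpace ℝ (Fin n) → EuclideanSpace ℝ (Fin n))
    (g_p : EuclideanSpace ℝ (Fin n) →
      (EuclideanSpace ℝ (Fin m) →L[ℝ] EuclideanSpace ℝ (Fin n)))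
    (V : EuclideanSpace ℝ (Fin n) → ℝ)
    (gradV : EuclideanSpace ℝ (Fin n) → EuclideanSpace ℝ (Fin n))
    (sig : EuclideanSpace ℝ (Fin n) → ℝ)
    (hfp : Continuous f_p) (hgp : Continuous g_p) (hsig : Continuous sig)
    (hV : ∀ x, HasGradientAt V (gradV x) x) (hgradV : Continuous gradV)
    (c : ℝ) (hc : 0 < c)
    (Wc : Set (EuclideanSpace ℝ (Fin n))) (hWc : Wc = {x | V x ≤ c})
    (hWcpt : IsCompact Wc)
    (μ : Measure (EuclideanSpace ℝ (Fin n))) [IsProbabilityMeasure μ]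
    (hsupp : ∀ x : EuclideanSpace ℝ (Fin n),
      x ∈ Wc ↔ ∀ U : Set (EuclideanSpace ℝ (Fin n)), IsOpen U → x ∈ U → 0 < μ U)
    (Θ : Set (EuclideanSpace ℝ (Fin K)))
    -- the learned controller is linear in its parameters
    (u : Fin K → EuclideanSpace ℝ (Fin n) → EuclideanSpace ℝ (Fin m))
    (hu : ∀ i, Continuous (u i))
    (hindep : ∀ θ : Fin K → ℝ, (∀ x ∈ Wc, ∑ i, θ i • u i x = 0) → θ = 0)
    (uhat : EuclideanSpace ℝ (Fin n) → EuclideanSpace ℝ (Fin K) →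
      EuclideanSpace ℝ (Fin m))
    (huhat : ∀ x θ, uhat x θ = ∑ i, θ i • u i x)
    (Δ : EuclideanSpace ℝ (Fin n) → EuclideanSpace ℝ (Fin K) → ℝ)
    (hΔ : ∀ x θ, Δ x θ = ⟪gradV x, f_p x + g_p x (uhat x θ)⟫_ℝ + sig x)
    (Ξ : Set (EuclideanSpace ℝ (Fin K)))
    (hΞ : Ξ = {θ ∈ Θ | ∀ x ∈ Wc, Δ x θ ≤ 0})
    -- the pointwise min-norm controller of the plant
    (upstar : EuclideanSpace ℝ (Fin n) → EuclideanSpace ℝ (Fin m))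
    (hup_cont : ContinuousOn upstar Wc)
    (hup_feas : ∀ x ∈ Wc, ⟪gradV x, f_p x + g_p x (upstar x)⟫_ℝ ≤ -sig x)
    (hup_min : ∀ x ∈ Wc, ∀ v : EuclideanSpace ℝ (Fin m),
      ⟪gradV x, f_p x + g_p x v⟫_ℝ ≤ -sig x → ‖upstar x‖ ≤ ‖v‖)
    -- the min-norm controller is realizable by the learned controller
    (θstar : EuclideanSpace ℝ (Fin K)) (hθstar : θstar ∈ Θ)
    (hθstar_eq : ∀ x ∈ Wc, uhat x θstar = upstar x) :
    ∀ θ ∈ Ξ, θ ≠ θstar →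
      (∫ x in Wc, ‖uhat x θstar‖ ^ 2 ∂μ) < ∫ x in Wc, ‖uhat x θ‖ ^ 2 ∂μ := by
  intro θ hθΞ hne
  -- continuity of x ↦ uhat x η
  have hcont : ∀ η : EuclideanSpace ℝ (Fin K), Continuous fun x => uhat x η := by
    intro η
    have : Continuous fun x => ∑ i, η i • u i x :=
      continuous_finset_sum _ fun i _ => (hu i).const_smul (η i)
    simpa only [huhat] using this
  have hWcmeas : MeasurableSet Wc := hWcpt.isClosed.measurableSet
  -- integrability
  have hint1 : IntegrableOn (fun x => ‖uhat x θ‖ ^ 2) Wc μ :=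
    (((hcont θ).norm.pow 2)).continuousOn.integrableOn_compact hWcpt
  have hint2 : IntegrableOn (fun x => ‖uhat x θstar‖ ^ 2) Wc μ :=
    (((hcont θstar).norm.pow 2)).continuousOn.integrableOn_compact hWcpt
  -- feasibility of uhat · θ on Wc
  have hfeas : ∀ x ∈ Wc, ⟪gradV x, f_p x + g_p x (uhat x θ)⟫_ℝ ≤ -sig x := by
    intro x hx
    have hmem := hθΞ
    rw [hΞ] at hmem
    have := hmem.2 x hx
    rw [hΔ] at this
    linarith
  have hle : ∀ x ∈ Wc, ‖uhat x θstar‖ ≤ ‖uhat x θ‖ := by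
    intro x hx
    rw [hθstar_eq x hx]
    exact hup_min x hx _ (hfeas x hx)
  -- a point where the two controllers differ
  have hx0 : ∃ x₀ ∈ Wc, uhat x₀ θ ≠ uhat x₀ θstar := by
    by_contra h
    push_neg at h
    have hz : (fun i => θ i - θstar i) = 0 := by
      apply hindep
      intro x hx
      have hxeq := h x hx
      rw [huhat, huhat] at hxeq
      simp only [sub_smul, Finset.sum_sub_distrib, hxeq, sub_self]
    apply hne
    ext i
    have := congrFun hz i
    simpa [sub_eq_zero] using this
  obtain ⟨x₀, hx₀mem, hx₀ne⟩ := hx0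
  -- strict inequality at x₀
  have hstrict : ‖uhat x₀ θstar‖ < ‖uhat x₀ θ‖ := by
    rcases (hle x₀ hx₀mem).lt_or_eq with h' | h'
    · exact h'
    · exfalso
      set a := uhat x₀ θstar with ha
      set b := uhat x₀ θ with hb
      have hfa : ⟪gradV x₀, f_p x₀ + g_p x₀ a⟫_ℝ ≤ -sig x₀ := by
        rw [ha, hθstar_eq x₀ hx₀mem]; exact hup_feas x₀ hx₀mem
      have hfb := hfeas x₀ hx₀mem
      have hmidarg : f_p x₀ + g_p x₀ ((2:ℝ)⁻¹ • (a + b)) =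
          (2:ℝ)⁻¹ • ((f_p x₀ + g_p x₀ a) + (f_p x₀ + g_p x₀ b)) := by
        rw [_root_.map_smul, map_add]
        module
      have hfmid : ⟪gradV x₀, f_p x₀ + g_p x₀ ((2:ℝ)⁻¹ • (a + b))⟫_ℝ ≤ -sig x₀ := by
        rw [hmidarg, real_inner_smul_right, inner_add_right]
        linarith
      have hmin := hup_min x₀ hx₀mem _ hfmid
      rw [← hθstar_eq x₀ hx₀mem, ← ha] at hmin
      rw [norm_smul] at hmin
      simp only [norm_inv, Real.norm_ofNat] at hmin
      have hpar := parallelogram_law_with_norm ℝ a b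
      have hab0 : 0 < ‖a - b‖ := norm_sub_pos_iff.mpr (Ne.symm hx₀ne)
      have hna : 0 ≤ ‖a‖ := norm_nonneg a
      have hnab : 0 ≤ ‖a + b‖ := norm_nonneg (a + b)
      nlinarith [hmin, hpar, h', hab0, hna, hnab]
  -- the gap function
  set F : EuclideanSpace ℝ (Fin n) → ℝ :=
    fun x => ‖uhat x θ‖ ^ 2 - ‖uhat x θstar‖ ^ 2 with hF
  have hFcont : Continuous F := ((hcont θ).norm.pow 2).sub ((hcont θstar).norm.pow 2)
  have hFx₀ : 0 < F x₀ := by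
    have h1 : ‖uhat x₀ θstar‖ ^ 2 < ‖uhat x₀ θ‖ ^ 2 :=
      pow_lt_pow_left₀ hstrict (norm_nonneg _) two_ne_zero
    simp only [hF]; linarith
  set ε : ℝ := F x₀ / 2 with hε
  have hεpos : 0 < ε := by positivity
  set U : Set (EuclideanSpace ℝ (Fin n)) := F ⁻¹' Set.Ioi ε with hU
  have hUopen : IsOpen U := isOpen_Ioi.preimage hFcont
  have hx₀U : x₀ ∈ U := by
    simp only [hU, Set.mem_preimage, Set.mem_Ioi, hε]
    linarith
  have hμU : 0 < μ U := (hsupp x₀).mp hx₀mem U hUopen hx₀U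
  -- the complement of Wc is null
  have hWcnull : μ Wcᶜ = 0 := by
    apply measure_null_of_locally_null
    intro y hy
    have hy' : ¬ ∀ U : Set (EuclideanSpace ℝ (Fin n)), IsOpen U → y ∈ U → 0 < μ U :=
      fun h => hy ((hsupp y).mpr h)
    push_neg at hy'
    obtain ⟨Uy, hUyopen, hyUy, hUy0⟩ := hy'
    exact ⟨Uy, mem_nhdsWithin_of_mem_nhds (hUyopen.mem_nhds hyUy),
      le_zero_iff.mp hUy0⟩
  have hμUWc : 0 < μ (U ∩ Wc) := by
    have hsub : U ⊆ (U ∩ Wc) ∪ Wcᶜ := by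
      intro x hx
      by_cases hxW : x ∈ Wc
      · exact Or.inl ⟨hx, hxW⟩
      · exact Or.inr hxW
    have := (measure_mono hsub).trans (measure_union_le (μ := μ) (U ∩ Wc) Wcᶜ)
    rw [hWcnull, add_zero] at this
    exact lt_of_lt_of_le hμU this
  have hintF : IntegrableOn F Wc μ := hint1.sub hint2
  have h1 : ε * (μ (U ∩ Wc)).toReal ≤ ∫ x in U ∩ Wc, F x ∂μ :=
    setIntegral_ge_of_const_le_real (hUopen.measurableSet.inter hWcmeas) (measure_ne_top μ _)
      (fun x hx => le_of_lt hx.1) (hintF.mono_set Set.inter_subset_right)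
  have hFnonneg : 0 ≤ᵐ[μ.restrict Wc] F := by
    refine (ae_restrict_iff' hWcmeas).mpr (Filter.Eventually.of_forall fun x hx => ?_)
    have := pow_le_pow_left₀ (norm_nonneg _) (hle x hx) 2
    simp only [hF, Pi.zero_apply]
    linarith
  have h2 : ∫ x in U ∩ Wc, F x ∂μ ≤ ∫ x in Wc, F x ∂μ :=
    setIntegral_mono_set hintF hFnonneg
      (Filter.Eventually.of_forall fun x hx => hx.2)
  have hpos : 0 < ε * (μ (U ∩ Wc)).toReal :=
    mul_pos hεpos (ENNReal.toReal_pos hμUWc.ne' (measure_ne_top μ _))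
  have key : 0 < ∫ x in Wc, F x ∂μ := lt_of_lt_of_le hpos (h1.trans h2)
  rw [hF] at key
  rw [integral_sub hint1 hint2] at key
  linarith
end

section
/- Suppose the learned controller is linear in its parameters, û(x,θ) = Σ_{k=1}^K θ_k u_k(x), with u_1, …, u_K : ℝⁿ → ℝᵐ continuous and linearly independent in C(W^c, ℝᵐ), and suppose there exists θ* ∈ Θ with û(x,θ*) = u_p*(x) for all x ∈ W^c. Then for every fixed θ ∈ Θ with θ ≠ θ* there exists λ̄ ≥ 0 such that for all λ > λ̄, L_λ(θ) > L_λ(θ*). (If θ ∈ Ξ this holds for all λ ≥ 0 by strict minimality of the expected control effort at θ*; if θ ∉ Ξ the penalty term, which is strictly positive at θ and zero at θ*, dominates for large λ.) -/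
open MeasureTheory
open scoped InnerProductSpace

lemma setIntegral_pos_aux {n : ℕ} (μ : Measure (EuclideanSpace ℝ (Fin n)))
    [IsProbabilityMeasure μ]
    (Wc : Set (EuclideanSpace ℝ (Fin n))) (hWcpt : IsCompact Wc)
    (hnull : μ Wcᶜ = 0)
    (h : EuclideanSpace ℝ (Fin n) → ℝ) (hcont : ContinuousOn h Wc)
    (hnn : ∀ x ∈ Wc, 0 ≤ h x) (x₀ : EuclideanSpace ℝ (Fin n)) (hx₀ : x₀ ∈ Wc)
    (hpos : 0 < h x₀)
    (hx0pos : ∀ U : Set (EuclideanSpace ℝ (Fin n)), IsOpen U → x₀ ∈ U → 0 < μ U) :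
    0 < ∫ x in Wc, h x ∂μ := by
  have hWm : MeasurableSet Wc := hWcpt.isClosed.measurableSet
  have hint : IntegrableOn h Wc μ := hcont.integrableOn_compact hWcpt
  have hmem : h ⁻¹' Set.Ioi (h x₀ / 2) ∈ nhdsWithin x₀ Wc :=
    (hcont x₀ hx₀) (Ioi_mem_nhds (by linarith))
  rw [mem_nhdsWithin] at hmem
  obtain ⟨U, hUopen, hxU, hUsub⟩ := hmem
  have hμU : 0 < μ (U ∩ Wc) := by
    have h1 : μ U ≤ μ (U ∩ Wc) + μ Wcᶜ := by
      calc μ U ≤ μ ((U ∩ Wc) ∪ Wcᶜ) := by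
            apply measure_mono; intro x hx
            by_cases hxw : x ∈ Wc
            · exact Or.inl ⟨hx, hxw⟩
            · exact Or.inr hxw
        _ ≤ μ (U ∩ Wc) + μ Wcᶜ := measure_union_le _ _
    rw [hnull, add_zero] at h1
    exact lt_of_lt_of_le (hx0pos U hUopen hxU) h1
  have hsub : U ∩ Wc ⊆ Wc := Set.inter_subset_right
  have hm2 : MeasurableSet (U ∩ Wc) := hUopen.measurableSet.inter hWm
  have hint2 : IntegrableOn h (U ∩ Wc) μ := hint.mono_set hsub
  have hlow : h x₀ / 2 * (μ (U ∩ Wc)).toReal ≤ ∫ x in U ∩ Wc, h x ∂μ := by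
    apply setIntegral_ge_of_const_le_real hm2 (measure_ne_top μ _) _ hint2
    intro x hx
    exact le_of_lt (hUsub hx)
  have htoReal : 0 < (μ (U ∩ Wc)).toReal :=
    ENNReal.toReal_pos hμU.ne' (measure_ne_top μ _)
  have h2 : (0:ℝ) < ∫ x in U ∩ Wc, h x ∂μ :=
    lt_of_lt_of_le (by positivity) hlow
  have hmono : ∫ x in U ∩ Wc, h x ∂μ ≤ ∫ x in Wc, h x ∂μ := by
    apply setIntegral_mono_set hint
    · filter_upwards [ae_restrict_mem hWm] with x hx using hnn x hx
    · exact HasSubset.Subset.eventuallyLE hsub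
  linarith

/-- Pointwise-in-`θ` content of Theorem 2 of the paper: with a linearly parameterized
controller whose basis is linearly independent on `C(W^c, ℝᵐ)`, if `θ*` realizes the
pointwise min-norm controller `u_p*` on `W^c`, then for every fixed `θ ∈ Θ` with `θ ≠ θ*`
there is `λ̄ ≥ 0` such that `L_λ(θ) > L_λ(θ*)` for all `λ > λ̄`. -/
theorem loss_dominates_eventually {n m K : ℕ}
    (f_p : EuclideanSpace ℝ (Fin n) → EuclideanSpace ℝ (Fin n))
    (g_p : EuclideanSpace ℝ (Fin n) →
      (EuclideanSpace ℝ (Fin m) →L[ℝ] EuclideanSpace ℝ (Fin n)))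
    (V : EuclideanSpace ℝ (Fin n) → ℝ)
    (gradV : EuclideanSpace ℝ (Fin n) → EuclideanSpace ℝ (Fin n))
    (sig : EuclideanSpace ℝ (Fin n) → ℝ)
    (hfp : Continuous f_p) (hgp : Continuous g_p) (hsig : Continuous sig)
    (hV : ∀ x, HasGradientAt V (gradV x) x) (hgradV : Continuous gradV)
    (c : ℝ) (hc : 0 < c)
    (Wc : Set (EuclideanSpace ℝ (Fin n))) (hWc : Wc = {x | V x ≤ c})
    (hWcpt : IsCompact Wc)
    (μ : Measure (EuclideanSpace ℝ (Fin n))) [IsProbabilityMeasure μ]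
    (hsupp : ∀ x : EuclideanSpace ℝ (Fin n),
      x ∈ Wc ↔ ∀ U : Set (EuclideanSpace ℝ (Fin n)), IsOpen U → x ∈ U → 0 < μ U)
    (Θ : Set (EuclideanSpace ℝ (Fin K)))
    -- the learned controller is linear in its parameters
    (u : Fin K → EuclideanSpace ℝ (Fin n) → EuclideanSpace ℝ (Fin m))
    (hu : ∀ i, Continuous (u i))
    (hindep : ∀ θ : Fin K → ℝ, (∀ x ∈ Wc, ∑ i, θ i • u i x = 0) → θ = 0)
    (uhat : EuclideanSpace ℝ (Fin n) → EuclideanSpace ℝ (Fin K) →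
      EuclideanSpace ℝ (Fin m))
    (huhat : ∀ x θ, uhat x θ = ∑ i, θ i • u i x)
    (Δ : EuclideanSpace ℝ (Fin n) → EuclideanSpace ℝ (Fin K) → ℝ)
    (hΔ : ∀ x θ, Δ x θ = ⟪gradV x, f_p x + g_p x (uhat x θ)⟫_ℝ + sig x)
    (L : ℝ → EuclideanSpace ℝ (Fin K) → ℝ)
    (hL : ∀ lam θ, L lam θ = ∫ x in Wc, (‖uhat x θ‖ ^ 2 + lam * max 0 (Δ x θ)) ∂μ)
    (Ξ : Set (EuclideanSpace ℝ (Fin K)))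
    (hΞ : Ξ = {θ ∈ Θ | ∀ x ∈ Wc, Δ x θ ≤ 0})
    -- the pointwise min-norm controller of the plant
    (upstar : EuclideanSpace ℝ (Fin n) → EuclideanSpace ℝ (Fin m))
    (hup_cont : ContinuousOn upstar Wc)
    (hup_feas : ∀ x ∈ Wc, ⟪gradV x, f_p x + g_p x (upstar x)⟫_ℝ ≤ -sig x)
    (hup_min : ∀ x ∈ Wc, ∀ v : EuclideanSpace ℝ (Fin m),
      ⟪gradV x, f_p x + g_p x v⟫_ℝ ≤ -sig x → ‖upstar x‖ ≤ ‖v‖)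
    -- the min-norm controller is realizable by the learned controller
    (θstar : EuclideanSpace ℝ (Fin K)) (hθstar : θstar ∈ Θ)
    (hθstar_eq : ∀ x ∈ Wc, uhat x θstar = upstar x) :
    ∀ θ ∈ Θ, θ ≠ θstar → ∃ lambar : ℝ, 0 ≤ lambar ∧
      ∀ lam > lambar, L lam θstar < L lam θ := by
  intro θ hθ hne
  -- basic topology / measure facts
  have hWm : MeasurableSet Wc := hWcpt.isClosed.measurableSet
  have hnull : μ Wcᶜ = 0 := by
    apply measure_null_of_locally_null
    intro x hx
    have hnx : ¬ ∀ U : Set (EuclideanSpace ℝ (Fin n)), IsOpen U → x ∈ U → 0 < μ U :=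
      fun h => hx ((hsupp x).2 h)
    push_neg at hnx
    obtain ⟨U, hUo, hxU, hU⟩ := hnx
    exact ⟨U, mem_nhdsWithin_of_mem_nhds (hUo.mem_nhds hxU),
      le_antisymm hU zero_le⟩
  -- continuity facts
  have huhat_cont : ∀ ϑ : EuclideanSpace ℝ (Fin K), Continuous (fun x => uhat x ϑ) := by
    intro ϑ
    have he : (fun x => uhat x ϑ) = fun x => ∑ i, ϑ i • u i x := funext fun x => huhat x ϑ
    rw [he]
    exact continuous_finset_sum _ fun i _ => (hu i).const_smul (ϑ i)
  have hΔcont : ∀ ϑ : EuclideanSpace ℝ (Fin K), Continuous (fun x => Δ x ϑ) := by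
    intro ϑ
    have he : (fun x => Δ x ϑ)
        = fun x => ⟪gradV x, f_p x + g_p x (uhat x ϑ)⟫_ℝ + sig x := funext fun x => hΔ x ϑ
    rw [he]
    exact (hgradV.inner (hfp.add (hgp.clm_apply (huhat_cont ϑ)))).add hsig
  -- integrability facts
  have hqint : ∀ ϑ : EuclideanSpace ℝ (Fin K),
      IntegrableOn (fun x => ‖uhat x ϑ‖ ^ 2) Wc μ := fun ϑ =>
    (((huhat_cont ϑ).norm.pow 2).continuousOn).integrableOn_compact hWcpt
  have hpint : ∀ ϑ : EuclideanSpace ℝ (Fin K),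
      IntegrableOn (fun x => max 0 (Δ x ϑ)) Wc μ := fun ϑ =>
    ((continuous_const.max (hΔcont ϑ)).continuousOn).integrableOn_compact hWcpt
  -- splitting of the loss
  have hLsplit : ∀ lam : ℝ, ∀ ϑ : EuclideanSpace ℝ (Fin K),
      L lam ϑ = (∫ x in Wc, ‖uhat x ϑ‖ ^ 2 ∂μ)
        + lam * ∫ x in Wc, max 0 (Δ x ϑ) ∂μ := by
    intro lam ϑ
    rw [hL, integral_add (hqint ϑ) ((hpint ϑ).const_mul lam), integral_const_mul]
  -- penalty integral vanishes at θstar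
  have hPstar : ∫ x in Wc, max 0 (Δ x θstar) ∂μ = 0 := by
    have hz : ∀ x ∈ Wc, max 0 (Δ x θstar) = 0 := by
      intro x hx
      apply max_eq_left
      have h1 := hup_feas x hx
      rw [hΔ, hθstar_eq x hx]
      linarith
    have : ∫ x in Wc, max 0 (Δ x θstar) ∂μ = ∫ _x in Wc, (0:ℝ) ∂μ :=
      setIntegral_congr_fun hWm hz
    rw [this, integral_zero]
  -- strict pointwise minimality
  have hkey : ∀ x ∈ Wc, Δ x θ ≤ 0 → uhat x θ ≠ upstar x →
      ‖upstar x‖ ^ 2 < ‖uhat x θ‖ ^ 2 := by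
    intro x hx hΔle hne'
    set v := uhat x θ with hv
    set w := upstar x with hw
    have hfeas : ⟪gradV x, f_p x + g_p x v⟫_ℝ ≤ -sig x := by
      rw [hΔ] at hΔle; linarith
    have hfeas2 := hup_feas x hx
    have hmid_feas : ⟪gradV x, f_p x + g_p x ((2:ℝ)⁻¹ • (v + w))⟫_ℝ ≤ -sig x := by
      have e1 : ⟪gradV x, f_p x + g_p x ((2:ℝ)⁻¹ • (v + w))⟫_ℝ
          = (2:ℝ)⁻¹ * (⟪gradV x, f_p x + g_p x v⟫_ℝ + ⟪gradV x, f_p x + g_p x w⟫_ℝ) := by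
        rw [(g_p x).map_smul, (g_p x).map_add]
        rw [inner_add_right, inner_add_right, inner_add_right, inner_smul_right,
          inner_add_right]
        ring
      rw [e1]; linarith
    have hle2 : ‖w‖ ≤ ‖(2:ℝ)⁻¹ • (v + w)‖ := hup_min x hx _ hmid_feas
    have hpar := parallelogram_law_with_norm ℝ v w
    have hns : ‖(2:ℝ)⁻¹ • (v + w)‖ = (2:ℝ)⁻¹ * ‖v + w‖ := by
      rw [norm_smul]; norm_num
    have hvw : 0 < ‖v - w‖ := by
      rw [norm_pos_iff]; exact sub_ne_zero.2 hne'
    rw [hns] at hle2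
    nlinarith [norm_nonneg (v + w), norm_nonneg v, norm_nonneg w,
      mul_le_mul hle2 hle2 (norm_nonneg w) (by positivity), mul_pos hvw hvw]
  by_cases hcase : ∀ x ∈ Wc, Δ x θ ≤ 0
  · -- θ feasible on Wc: effort term strictly dominates for all λ > 0
    refine ⟨0, le_refl 0, ?_⟩
    intro lam _
    -- find a point where the controllers differ
    have hx0 : ∃ x₀ ∈ Wc, uhat x₀ θ ≠ uhat x₀ θstar := by
      by_contra hno; push_neg at hno
      apply hne
      have hz : (fun i => θ i - θstar i) = 0 := by
        apply hindep
        intro x hx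
        have h1 := hno x hx
        rw [huhat, huhat] at h1
        have h2 : ∑ i, (θ i - θstar i) • u i x
            = ∑ i, θ i • u i x - ∑ i, θstar i • u i x := by
          rw [← Finset.sum_sub_distrib]
          exact Finset.sum_congr rfl fun i _ => sub_smul _ _ _
        rw [h2, h1, sub_self]
      ext i
      have := congrFun hz i
      simpa [sub_eq_zero] using this
    obtain ⟨x₀, hx₀, hne0⟩ := hx0
    have hne0' : uhat x₀ θ ≠ upstar x₀ := by
      rw [hθstar_eq x₀ hx₀] at hne0; exact hne0
    have hnn : ∀ x ∈ Wc, 0 ≤ ‖uhat x θ‖ ^ 2 - ‖uhat x θstar‖ ^ 2 := by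
      intro x hx
      have hfeas : ⟪gradV x, f_p x + g_p x (uhat x θ)⟫_ℝ ≤ -sig x := by
        have := hcase x hx; rw [hΔ] at this; linarith
      have h1 : ‖upstar x‖ ≤ ‖uhat x θ‖ := hup_min x hx _ hfeas
      rw [hθstar_eq x hx]
      nlinarith [norm_nonneg (upstar x), norm_nonneg (uhat x θ)]
    have hpos0 : 0 < ‖uhat x₀ θ‖ ^ 2 - ‖uhat x₀ θstar‖ ^ 2 := by
      have := hkey x₀ hx₀ (hcase x₀ hx₀) hne0'
      rw [hθstar_eq x₀ hx₀]
      linarith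
    have hIpos := setIntegral_pos_aux μ Wc hWcpt hnull
      (fun x => ‖uhat x θ‖ ^ 2 - ‖uhat x θstar‖ ^ 2)
      ((((huhat_cont θ).norm.pow 2).sub ((huhat_cont θstar).norm.pow 2)).continuousOn)
      hnn x₀ hx₀ hpos0 ((hsupp x₀).1 hx₀)
    rw [integral_sub (hqint θ) (hqint θstar)] at hIpos
    have hPθ : ∫ x in Wc, max 0 (Δ x θ) ∂μ = 0 := by
      have hz : ∀ x ∈ Wc, max 0 (Δ x θ) = 0 := fun x hx => max_eq_left (hcase x hx)
      have : ∫ x in Wc, max 0 (Δ x θ) ∂μ = ∫ _x in Wc, (0:ℝ) ∂μ :=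
        setIntegral_congr_fun hWm hz
      rw [this, integral_zero]
    rw [hLsplit, hLsplit, hPstar, hPθ]
    linarith
  · -- θ infeasible somewhere: penalty dominates for large λ
    push_neg at hcase
    obtain ⟨x₀, hx₀, hΔpos⟩ := hcase
    set P := ∫ x in Wc, max 0 (Δ x θ) ∂μ with hP
    have hPpos : 0 < P := by
      apply setIntegral_pos_aux μ Wc hWcpt hnull (fun x => max 0 (Δ x θ))
        ((continuous_const.max (hΔcont θ)).continuousOn)
        (fun x _ => le_max_left _ _) x₀ hx₀ _ ((hsupp x₀).1 hx₀)
      exact lt_max_iff.2 (Or.inr hΔpos)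
    set A := ∫ x in Wc, ‖uhat x θ‖ ^ 2 ∂μ with hA
    set Astar := ∫ x in Wc, ‖uhat x θstar‖ ^ 2 ∂μ with hAs
    refine ⟨max 0 ((Astar - A) / P), le_max_left _ _, ?_⟩
    intro lam hlam
    have h1 : (Astar - A) / P < lam := lt_of_le_of_lt (le_max_right _ _) hlam
    have h2 : Astar - A < lam * P := (div_lt_iff₀ hPpos).1 h1
    rw [hLsplit, hLsplit, hPstar]
    linarith
end

section
/- Let f : ℝⁿ → ℝⁿ, g : ℝⁿ → ℝ^{n×m}, let V : ℝⁿ → ℝ be differentiable, let σ : ℝⁿ → ℝ, and fix x ∈ ℝⁿ at which the CLF condition inf_{u ∈ ℝᵐ} ∇V(x)·(f(x) + g(x)u) ≤ −σ(x) holds. Set a(x) := ∇V(x)·f(x) + σ(x) and b(x) := (∇V(x)·g(x))ᵀ ∈ ℝᵐ, and define u*(x) := −(a(x)/‖b(x)‖₂²) b(x) if a(x) > 0, and u*(x) := 0 if a(x) ≤ 0. Then u*(x) satisfies the dissipation constraint ∇V(x)·(f(x) + g(x)u*(x)) ≤ −σ(x). -/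
open scoped InnerProductSpace

/-- Feasibility of the closed-form min-norm control law: at a point `x` where the CLF
condition holds, with `a(x) = ∇V(x)·f(x) + σ(x)` and `b(x) = (∇V(x)·g(x))ᵀ`, the control
`u*(x) = −(a(x)/‖b(x)‖²) b(x)` if `a(x) > 0` and `u*(x) = 0` otherwise satisfies the
dissipation constraint `∇V(x)·(f(x) + g(x)u*(x)) ≤ −σ(x)`. -/
theorem min_norm_feasible {n m : ℕ}
    (f : EuclideanSpace ℝ (Fin n) → EuclideanSpace ℝ (Fin n))
    (g : EuclideanSpace ℝ (Fin n) →
      (EuclideanSpace ℝ (Fin m) →L[ℝ] EuclideanSpace ℝ (Fin n)))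
    (V : EuclideanSpace ℝ (Fin n) → ℝ)
    (gradV : EuclideanSpace ℝ (Fin n) → EuclideanSpace ℝ (Fin n))
    (sig : EuclideanSpace ℝ (Fin n) → ℝ)
    (x : EuclideanSpace ℝ (Fin n))
    (hV : HasGradientAt V (gradV x) x)
    -- the CLF condition `inf_u ∇V(x)·(f(x) + g(x)u) ≤ −σ(x)` at `x`
    (hCLF : ∀ ε : ℝ, 0 < ε →
      ∃ u : EuclideanSpace ℝ (Fin m), ⟪gradV x, f x + g x u⟫_ℝ ≤ -sig x + ε)
    -- `b(x) = (∇V(x)·g(x))ᵀ ∈ ℝᵐ`, characterized by `⟨b(x), u⟩ = ∇V(x)·(g(x)u)`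
    (bx : EuclideanSpace ℝ (Fin m))
    (hbx : ∀ u : EuclideanSpace ℝ (Fin m), ⟪bx, u⟫_ℝ = ⟪gradV x, g x u⟫_ℝ)
    -- `a(x) = ∇V(x)·f(x) + σ(x)`
    (ax : ℝ) (hax : ax = ⟪gradV x, f x⟫_ℝ + sig x)
    -- the closed-form min-norm control law
    (ustar : EuclideanSpace ℝ (Fin m))
    (hustar : ustar = if 0 < ax then (-(ax / ‖bx‖ ^ 2)) • bx else 0) :
    ⟪gradV x, f x + g x ustar⟫_ℝ ≤ -sig x := by
  have key : ∀ u, ⟪gradV x, f x + g x u⟫_ℝ = ⟪gradV x, f x⟫_ℝ + ⟪bx, u⟫_ℝ := by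
    intro u
    rw [inner_add_right, hbx]
  by_cases h : 0 < ax
  · -- bx ≠ 0
    have hbne : bx ≠ 0 := by
      intro hb0
      obtain ⟨u, hu⟩ := hCLF (ax / 2) (by linarith)
      rw [key, hb0, inner_zero_left, add_zero] at hu
      have : ax = ⟪gradV x, f x⟫_ℝ + sig x := hax
      linarith
    have hbpos : (0:ℝ) < ‖bx‖ := norm_pos_iff.mpr hbne
    have hb2 : (0:ℝ) < ‖bx‖ ^ 2 := by positivity
    rw [hustar, if_pos h, key, real_inner_smul_right, real_inner_self_eq_norm_sq]
    have : -(ax / ‖bx‖ ^ 2) * ‖bx‖ ^ 2 = -ax := by field_simp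
    rw [this]
    linarith [hax]
  · rw [hustar, if_neg h, key, inner_zero_right, add_zero]
    have := hax
    push_neg at h
    linarith
end
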